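/- Existence of a feasible rounding (extended matrix rounding with balance constraints): for every finite set F of facilities, every movement set M ⊆ F × F with (i,i) ∉ M for all i ∈ F, and every X^Rel : M → ℝ with X^Rel ≥ 0, there exists a feasible rounding X : M → ℤ of X^Rel; that is, an integer vector satisfying the entrywise bounds ⌊X^Rel_{i,j}⌋ ≤ X_{i,j} ≤ ⌈X^Rel_{i,j}⌉, the out-sum bounds ⌊Z^S_i⌋ ≤ ∑_{j : (i,j) ∈ M} X_{i,j} ≤ ⌈Z^S_i⌉, the in-sum bounds ⌊Z^R_i⌋ ≤ ∑_{j : (j,i) ∈ M} X_{j,i} ≤ ⌈Z^R_i⌉, and the balance bounds ⌊B_i⌋ ≤ ∑_{j : (j,i) ∈ M} X_{j,i} − ∑_{j : (i,j) ∈ M} X_{i,j} ≤ ⌈B_i⌉, for all (i,j) ∈ M and i ∈ F. -/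

import Mathlib

open Finset

noncomputable section

variable {F : Type*} [Fintype F] [DecidableEq F]

/-- Total (relaxed) amount sent by facility `i`. -/
def ZS (M : Finset (F × F)) (XRel : F → F → ℝ) (i : F) : ℝ :=
  ∑ j ∈ univ.filter (fun j => (i, j) ∈ M), XRel i j

/-- Total (relaxed) amount received by facility `i`. -/
def ZR (M : Finset (F × F)) (XRel : F → F → ℝ) (i : F) : ℝ :=
  ∑ j ∈ univ.filter (fun j => (j, i) ∈ M), XRel j i

/-- Net balance (received minus sent) of facility `i`. -/
def Bal (M : Finset (F × F)) (XRel : F → F → ℝ) (i : F) : ℝ :=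
  ZR M XRel i - ZS M XRel i

/-- `X : M → ℤ` is a feasible rounding of the relaxed values `XRel`: entrywise bounds,
out-sum bounds, in-sum bounds, and balance bounds. -/
def FeasibleRounding (M : Finset (F × F)) (XRel : F → F → ℝ) (X : F → F → ℤ) : Prop :=
  (∀ m ∈ M, ⌊XRel m.1 m.2⌋ ≤ X m.1 m.2 ∧ X m.1 m.2 ≤ ⌈XRel m.1 m.2⌉) ∧
  (∀ i : F, ⌊ZS M XRel i⌋ ≤ (∑ j ∈ univ.filter (fun j => (i, j) ∈ M), X i j) ∧
    (∑ j ∈ univ.filter (fun j => (i, j) ∈ M), X i j) ≤ ⌈ZS M XRel i⌉) ∧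
  (∀ i : F, ⌊ZR M XRel i⌋ ≤ (∑ j ∈ univ.filter (fun j => (j, i) ∈ M), X j i) ∧
    (∑ j ∈ univ.filter (fun j => (j, i) ∈ M), X j i) ≤ ⌈ZR M XRel i⌉) ∧
  (∀ i : F, ⌊Bal M XRel i⌋ ≤ (∑ j ∈ univ.filter (fun j => (j, i) ∈ M), X j i)
        - (∑ j ∈ univ.filter (fun j => (i, j) ∈ M), X i j) ∧
    (∑ j ∈ univ.filter (fun j => (j, i) ∈ M), X j i)
        - (∑ j ∈ univ.filter (fun j => (i, j) ∈ M), X i j) ≤ ⌈Bal M XRel i⌉)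

open scoped Classical

section Dep
variable {V A : Type*} [Fintype V] [DecidableEq V] [Fintype A] [DecidableEq A]

lemma exists_circulation_direction (t h : A → V) (hth : ∀ a, t a ≠ h a)
    (E : Finset A) (hE : E.Nonempty)
    (hdeg : ∀ v : V, (E.filter (fun a => t a = v ∨ h a = v)).card ≠ 1) :
    ∃ c : A → ℝ, (∀ a ∉ E, c a = 0) ∧ (∃ a, c a ≠ 0) ∧
      ∀ v : V, ∑ a ∈ univ.filter (fun a => h a = v), c a
             = ∑ a ∈ univ.filter (fun a => t a = v), c a := by
  set V' : Finset V := E.biUnion (fun a => {t a, h a}) with hV'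
  have htV' : ∀ a ∈ E, t a ∈ V' := fun a ha => by
    simp only [hV', Finset.mem_biUnion]; exact ⟨a, ha, by simp⟩
  have hhV' : ∀ a ∈ E, h a ∈ V' := fun a ha => by
    simp only [hV', Finset.mem_biUnion]; exact ⟨a, ha, by simp⟩
  set w : E → ({x // x ∈ V'} → ℝ) := fun e v =>
    (if h e.1 = v.1 then (1:ℝ) else 0) - (if t e.1 = v.1 then (1:ℝ) else 0) with hw
  by_cases hind : LinearIndependent ℝ w
  · exfalso
    have key : ∀ (u : V) (hu : u ∈ V'),
        (∑ x : {x // x ∈ V'}, if u = (x:V) then (1:ℝ) else 0) = 1 := by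
      intro u hu
      have h2 : ∀ x : {x // x ∈ V'}, (u = (x:V)) ↔ ((⟨u, hu⟩ : {x // x ∈ V'}) = x) :=
        fun x => by simp [Subtype.ext_iff]
      simp only [h2]
      simp
    set σ : ({x // x ∈ V'} → ℝ) →ₗ[ℝ] ℝ := ∑ v : {x // x ∈ V'}, LinearMap.proj v with hσ
    have hσapp : ∀ x : {x // x ∈ V'} → ℝ, σ x = ∑ v : {x // x ∈ V'}, x v := by
      intro x; simp [hσ, LinearMap.sum_apply]
    have hmem : ∀ e : E, w e ∈ LinearMap.ker σ := by
      intro e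
      rw [LinearMap.mem_ker, hσapp, Finset.sum_sub_distrib]
      have h1 : (∑ x : {x // x ∈ V'}, if h e.1 = (x:V) then (1:ℝ) else 0) = 1 :=
        key _ (hhV' e.1 e.2)
      have h2 : (∑ x : {x // x ∈ V'}, if t e.1 = (x:V) then (1:ℝ) else 0) = 1 :=
        key _ (htV' e.1 e.2)
      rw [h1, h2]; ring
    set w' : E → LinearMap.ker σ := fun e => ⟨w e, hmem e⟩ with hw'
    have hind' : LinearIndependent ℝ w' := by
      apply LinearIndependent.of_comp (LinearMap.ker σ).subtype
      exact hind
    have hcard1 : Fintype.card E ≤ Module.finrank ℝ (LinearMap.ker σ) :=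
      hind'.fintype_card_le_finrank
    obtain ⟨a0, ha0⟩ := hE
    have hsurj : LinearMap.range σ = ⊤ := by
      rw [LinearMap.range_eq_top]
      intro r
      refine ⟨Pi.single (⟨t a0, htV' a0 ha0⟩ : {x // x ∈ V'}) r, ?_⟩
      rw [hσapp]
      simp
    have hrk : Module.finrank ℝ (LinearMap.ker σ) + 1 = V'.card := by
      have h3 := LinearMap.finrank_range_add_finrank_ker σ
      rw [hsurj, finrank_top, Module.finrank_self] at h3
      have hdim : Module.finrank ℝ ({x // x ∈ V'} → ℝ) = V'.card := by
        simp [Module.finrank_pi, Fintype.card_coe]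
      omega
    -- double counting
    have hdeg2 : ∀ v ∈ V', 2 ≤ (E.filter (fun a => t a = v ∨ h a = v)).card := by
      intro v hv
      rw [hV', Finset.mem_biUnion] at hv
      obtain ⟨a, ha, hva⟩ := hv
      simp only [Finset.mem_insert, Finset.mem_singleton] at hva
      have hne : (E.filter (fun a => t a = v ∨ h a = v)).Nonempty := by
        refine ⟨a, Finset.mem_filter.2 ⟨ha, ?_⟩⟩
        rcases hva with hva | hva
        exacts [Or.inl hva.symm, Or.inr hva.symm]
      have hp := Finset.card_pos.2 hne
      have hd := hdeg v
      omega
    have hdouble : ∑ v : V, (E.filter (fun a => t a = v ∨ h a = v)).card = 2 * E.card := by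
      have h1 : ∀ v : V, (E.filter (fun a => t a = v ∨ h a = v)).card
          = ∑ a ∈ E, (if t a = v ∨ h a = v then 1 else 0) := fun v => Finset.card_filter _ _
      simp only [h1]
      rw [Finset.sum_comm]
      have h2 : ∀ a ∈ E, (∑ v : V, if t a = v ∨ h a = v then 1 else 0) = 2 := by
        intro a _
        have h3 : ∀ v : V, (t a = v ∨ h a = v) ↔ v ∈ ({t a, h a} : Finset V) := by
          intro v; simp [eq_comm, or_comm]
        simp only [h3]
        rw [Finset.sum_ite_mem, Finset.univ_inter, Finset.sum_const]
        rw [Finset.card_insert_of_notMem (by simpa using hth a), Finset.card_singleton]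
        simp
      rw [Finset.sum_congr rfl h2, Finset.sum_const, smul_eq_mul, mul_comm]
    have hVE : V'.card ≤ E.card := by
      have h4 : 2 * V'.card ≤ ∑ v ∈ V', (E.filter (fun a => t a = v ∨ h a = v)).card := by
        rw [two_mul]
        calc V'.card + V'.card = ∑ _v ∈ V', 2 := by rw [Finset.sum_const, smul_eq_mul]; omega
        _ ≤ _ := Finset.sum_le_sum hdeg2
      have h5 : ∑ v ∈ V', (E.filter (fun a => t a = v ∨ h a = v)).card
          ≤ ∑ v : V, (E.filter (fun a => t a = v ∨ h a = v)).card :=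
        Finset.sum_le_sum_of_subset (Finset.subset_univ _)
      omega
    have hV'pos : 1 ≤ V'.card := Finset.card_pos.2 ⟨t a0, htV' a0 ha0⟩
    rw [Fintype.card_coe] at hcard1
    omega
  · rw [Fintype.not_linearIndependent_iff] at hind
    obtain ⟨g, hg0, e0, he0⟩ := hind
    set c : A → ℝ := fun a => if ha : a ∈ E then g ⟨a, ha⟩ else 0 with hc
    have hcE : ∀ a ∉ E, c a = 0 := fun a ha => by simp [hc, ha]
    have hcg : ∀ e : {x // x ∈ E}, c e.1 = g e := fun e => by simp [hc, e.2]
    refine ⟨c, hcE, ⟨e0.1, by rw [hcg e0]; exact he0⟩, ?_⟩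
    intro v
    rw [← sub_eq_zero, Finset.sum_filter, Finset.sum_filter, ← Finset.sum_sub_distrib]
    set Φ : A → ℝ := fun a => (if h a = v then c a else 0) - (if t a = v then c a else 0) with hΦ
    have hΦ0 : ∀ a ∉ E, Φ a = 0 := by
      intro a ha; simp [hΦ, hcE a ha]
    have hstep1 : ∑ a : A, Φ a = ∑ a ∈ E, Φ a :=
      (Finset.sum_subset (Finset.subset_univ E) (fun a _ ha => hΦ0 a ha)).symm
    rw [show (∑ a : A, ((if h a = v then c a else 0) - if t a = v then c a else 0)) = ∑ a : A, Φ a from rfl,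
      hstep1, ← Finset.sum_attach E Φ]
    by_cases hv : v ∈ V'
    · have h6 := congrFun hg0 ⟨v, hv⟩
      simp only [Finset.sum_apply, Pi.smul_apply, Pi.zero_apply, smul_eq_mul, hw] at h6
      rw [← h6, Finset.univ_eq_attach]
      refine Finset.sum_congr rfl fun e _ => ?_
      simp only [hΦ, hcg e]
      by_cases h1 : h e.1 = v <;> by_cases h2 : t e.1 = v <;> simp [h1, h2] <;> ring
    · refine Finset.sum_eq_zero fun e _ => ?_
      have h1 : h e.1 ≠ v := fun hh => hv (hh ▸ hhV' e.1 e.2)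
      have h2 : t e.1 ≠ v := fun hh => hv (hh ▸ htV' e.1 e.2)
      simp [hΦ, h1, h2]
end Dep
open scoped Classical

section Circ
variable {V A : Type*} [Fintype V] [DecidableEq V] [Fintype A] [DecidableEq A]

lemma circulation_round_aux (t h : A → V) (hth : ∀ a, t a ≠ h a) :
    ∀ (n : ℕ) (f : A → ℝ), (univ.filter (fun a => ¬ ∃ k : ℤ, (k:ℝ) = f a)).card = n →
    (∀ v : V, ∑ a ∈ univ.filter (fun a => h a = v), f a
            = ∑ a ∈ univ.filter (fun a => t a = v), f a) →
    ∃ g : A → ℤ, (∀ a, ⌊f a⌋ ≤ g a ∧ g a ≤ ⌈f a⌉) ∧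
      ∀ v : V, ∑ a ∈ univ.filter (fun a => h a = v), g a
             = ∑ a ∈ univ.filter (fun a => t a = v), g a := by
  intro n
  induction n using Nat.strong_induction_on with
  | _ n IH =>
    intro f hn hcons
    by_cases h0 : n = 0
    · -- all values integral
      subst h0
      rw [Finset.card_eq_zero, Finset.filter_eq_empty_iff] at hn
      have hint : ∀ a : A, ((⌊f a⌋ : ℝ)) = f a := by
        intro a
        obtain ⟨k, hk⟩ := not_not.mp (hn (Finset.mem_univ a))
        rw [← hk]; norm_num
      refine ⟨fun a => ⌊f a⌋, fun a => ⟨le_refl _, Int.floor_le_ceil _⟩, fun v => ?_⟩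
      have := hcons v
      have hcast : ((∑ a ∈ univ.filter (fun a => h a = v), ⌊f a⌋ : ℤ) : ℝ)
          = ((∑ a ∈ univ.filter (fun a => t a = v), ⌊f a⌋ : ℤ) : ℝ) := by
        push_cast
        simpa only [hint] using this
      exact_mod_cast hcast
    · -- fractional arcs exist
      set E : Finset A := univ.filter (fun a => ¬ ∃ k : ℤ, (k:ℝ) = f a) with hEdef
      have hEne : E.Nonempty := by
        rw [← Finset.card_pos, hn]; omega
      -- degree condition
      have hdeg : ∀ v : V, (E.filter (fun a => t a = v ∨ h a = v)).card ≠ 1 := by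
        intro v hcard
        obtain ⟨a0, ha0⟩ := Finset.card_eq_one.mp hcard
        have ha0E : a0 ∈ E ∧ (t a0 = v ∨ h a0 = v) := by
          have : a0 ∈ E.filter (fun a => t a = v ∨ h a = v) := by rw [ha0]; simp
          exact Finset.mem_filter.mp this
        -- every other arc incident to v is integral
        have hother : ∀ a : A, a ≠ a0 → (t a = v ∨ h a = v) → ∃ k : ℤ, (k:ℝ) = f a := by
          intro a hne hinc
          by_contra hna
          have : a ∈ E.filter (fun a => t a = v ∨ h a = v) :=
            Finset.mem_filter.2 ⟨Finset.mem_filter.2 ⟨Finset.mem_univ _, hna⟩, hinc⟩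
          rw [ha0] at this
          exact hne (Finset.mem_singleton.mp this)
        -- conservation at v gives contradiction
        have hc := hcons v
        -- define integer-valued choice on integral arcs
        have hsum : ∀ (S : Finset A), a0 ∉ S → (∀ a ∈ S, t a = v ∨ h a = v) →
            ∃ k : ℤ, (k:ℝ) = ∑ a ∈ S, f a := by
          intro S ha0S hS
          induction S using Finset.induction_on with
          | empty => exact ⟨0, by simp⟩
          | @insert x s hx ih =>
            obtain ⟨k1, hk1⟩ := hother x (fun hh => ha0S (hh ▸ Finset.mem_insert_self x s))
              (hS x (Finset.mem_insert_self x s))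
            obtain ⟨k2, hk2⟩ := ih (fun hh => ha0S (Finset.mem_insert_of_mem hh))
              (fun a ha => hS a (Finset.mem_insert_of_mem ha))
            exact ⟨k1 + k2, by rw [Finset.sum_insert hx]; push_cast; rw [hk1, hk2]⟩
        -- a0 is in exactly one of the two sums
        rcases ha0E.2 with hta0 | hha0
        · -- a0 in tail sum
          have hmem : a0 ∈ univ.filter (fun a => t a = v) := by simp [hta0]
          rw [← Finset.add_sum_erase _ f hmem] at hc
          have hnot : a0 ∉ univ.filter (fun a => h a = v) := by
            simp only [Finset.mem_filter, Finset.mem_univ, true_and]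
            intro hh; exact hth a0 (hta0.trans hh.symm)
          obtain ⟨k1, hk1⟩ := hsum (univ.filter (fun a => h a = v)) hnot
            (fun a ha => Or.inr (Finset.mem_filter.mp ha).2)
          obtain ⟨k2, hk2⟩ := hsum ((univ.filter (fun a => t a = v)).erase a0)
            (Finset.notMem_erase _ _)
            (fun a ha => Or.inl (Finset.mem_filter.mp (Finset.mem_of_mem_erase ha)).2)
          have : ∃ k : ℤ, (k:ℝ) = f a0 := ⟨k1 - k2, by push_cast; rw [hk1, hk2]; linarith⟩
          exact (Finset.mem_filter.mp ha0E.1).2 this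
        · -- a0 in head sum
          have hmem : a0 ∈ univ.filter (fun a => h a = v) := by simp [hha0]
          rw [← Finset.add_sum_erase _ f hmem] at hc
          have hnot : a0 ∉ univ.filter (fun a => t a = v) := by
            simp only [Finset.mem_filter, Finset.mem_univ, true_and]
            intro hh; exact hth a0 (hh.trans hha0.symm)
          obtain ⟨k1, hk1⟩ := hsum (univ.filter (fun a => t a = v)) hnot
            (fun a ha => Or.inl (Finset.mem_filter.mp ha).2)
          obtain ⟨k2, hk2⟩ := hsum ((univ.filter (fun a => h a = v)).erase a0)
            (Finset.notMem_erase _ _)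
            (fun a ha => Or.inr (Finset.mem_filter.mp (Finset.mem_of_mem_erase ha)).2)
          have : ∃ k : ℤ, (k:ℝ) = f a0 := ⟨k1 - k2, by push_cast; rw [hk1, hk2]; linarith⟩
          exact (Finset.mem_filter.mp ha0E.1).2 this
      obtain ⟨c, hcsupp, ⟨ac, hac⟩, hccons⟩ := exists_circulation_direction t h hth E hEne hdeg
      -- facts about fractional arcs
      have hfrac : ∀ a ∈ E, (⌊f a⌋ : ℝ) < f a ∧ f a < ⌈f a⌉ := by
        intro a ha
        have hna := (Finset.mem_filter.mp ha).2
        constructor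
        · rcases lt_or_eq_of_le (Int.floor_le (f a)) with h1 | h1
          · exact h1
          · exact absurd ⟨⌊f a⌋, h1⟩ hna
        · rcases lt_or_eq_of_le (Int.le_ceil (f a)) with h1 | h1
          · exact h1
          · exact absurd ⟨⌈f a⌉, h1.symm⟩ hna
      -- the step size
      set D : Finset A := E.filter (fun a => c a ≠ 0) with hD
      have hDne : D.Nonempty := by
        refine ⟨ac, Finset.mem_filter.2 ⟨?_, hac⟩⟩
        by_contra hacE
        exact hac (hcsupp ac hacE)
      set δ : A → ℝ := fun a =>
        if 0 < c a then (⌈f a⌉ - f a) / c a else (f a - ⌊f a⌋) / (-c a) with hδ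
      have hδpos : ∀ a ∈ D, 0 < δ a := by
        intro a ha
        obtain ⟨haE, hac0⟩ := Finset.mem_filter.mp ha
        obtain ⟨hfl, hfu⟩ := hfrac a haE
        rcases lt_trichotomy (c a) 0 with hc0 | hc0 | hc0
        · rw [hδ]; simp only [not_lt.2 (le_of_lt hc0), if_neg (not_lt.2 (le_of_lt hc0))]
          exact div_pos (by linarith) (by linarith)
        · exact absurd hc0 hac0
        · rw [hδ]; simp only [if_pos hc0]
          exact div_pos (by linarith) hc0
      set ts : ℝ := D.inf' hDne δ with hts
      obtain ⟨astar, hastar, hastareq⟩ := Finset.exists_mem_eq_inf' hDne δ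
      have htspos : 0 < ts := by
        rw [hts, Finset.lt_inf'_iff]
        exact fun a ha => hδpos a ha
      have htsle : ∀ a ∈ D, ts ≤ δ a := fun a ha => Finset.inf'_le δ ha
      -- new vector
      set f' : A → ℝ := fun a => f a + ts * c a with hf'
      -- bounds for arcs
      have hbounds : ∀ a ∈ D, (⌊f a⌋ : ℝ) ≤ f' a ∧ f' a ≤ (⌈f a⌉ : ℝ) := by
        intro a ha
        obtain ⟨haE, hac0⟩ := Finset.mem_filter.mp ha
        obtain ⟨hfl, hfu⟩ := hfrac a haE
        have hle := htsle a ha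
        rcases lt_trichotomy (c a) 0 with hc0 | hc0 | hc0
        · have hδa : δ a = (f a - ⌊f a⌋) / (-c a) := by
            rw [hδ]; simp [not_lt.2 (le_of_lt hc0)]
          constructor
          · have : ts * (-c a) ≤ δ a * (-c a) :=
              mul_le_mul_of_nonneg_right hle (by linarith)
            rw [hδa, div_mul_cancel₀ _ (by linarith : (-c a) ≠ 0)] at this
            simp only [hf']; nlinarith
          · simp only [hf']; nlinarith
        · exact absurd hc0 hac0
        · have hδa : δ a = (⌈f a⌉ - f a) / c a := by rw [hδ]; simp [hc0]
          constructor
          · simp only [hf']; nlinarith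
          · have : ts * c a ≤ δ a * c a := mul_le_mul_of_nonneg_right hle (le_of_lt hc0)
            rw [hδa, div_mul_cancel₀ _ (ne_of_gt hc0)] at this
            simp only [hf']; nlinarith
      have hsame : ∀ a ∉ D, f' a = f a := by
        intro a ha
        by_cases haE : a ∈ E
        · have : c a = 0 := by
            by_contra hc0
            exact ha (Finset.mem_filter.2 ⟨haE, hc0⟩)
          simp [hf', this]
        · simp [hf', hcsupp a haE]
      -- astar becomes integral
      have hastarint : ∃ k : ℤ, (k:ℝ) = f' astar := by
        obtain ⟨haE, hac0⟩ := Finset.mem_filter.mp hastar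
        rcases lt_trichotomy (c astar) 0 with hc0 | hc0 | hc0
        · refine ⟨⌊f astar⌋, ?_⟩
          have hδa : δ astar = (f astar - ⌊f astar⌋) / (-c astar) := by
            rw [hδ]; simp [not_lt.2 (le_of_lt hc0)]
          have heq : ts = (f astar - ⌊f astar⌋) / (-c astar) := by rw [hts, hastareq, hδa]
          have h9 : (f astar - ⌊f astar⌋) / (-c astar) * (-c astar) = (f astar - ⌊f astar⌋) :=
            div_mul_cancel₀ _ (by simpa using hac0)
          have h10 : ts * c astar = -((f astar - (⌊f astar⌋:ℝ)) / (-c astar) * (-c astar)) := by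
            rw [heq]; ring
          rw [h9] at h10
          show (⌊f astar⌋ : ℝ) = f astar + ts * c astar
          linarith
        · exact absurd hc0 hac0
        · refine ⟨⌈f astar⌉, ?_⟩
          have hδa : δ astar = (⌈f astar⌉ - f astar) / c astar := by rw [hδ]; simp [hc0]
          have heq : ts = (⌈f astar⌉ - f astar) / c astar := by rw [hts, hastareq, hδa]
          have h9 : ((⌈f astar⌉:ℝ) - f astar) / c astar * c astar = ((⌈f astar⌉:ℝ) - f astar) :=
            div_mul_cancel₀ _ hac0
          have h10 : ts * c astar = ((⌈f astar⌉:ℝ) - f astar) / c astar * c astar := by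
            rw [heq]
          rw [h9] at h10
          show (⌈f astar⌉ : ℝ) = f astar + ts * c astar
          linarith
      -- fractional set shrinks
      have hsubset : univ.filter (fun a => ¬ ∃ k : ℤ, (k:ℝ) = f' a) ⊆ E.erase astar := by
        intro a ha
        have hna := (Finset.mem_filter.mp ha).2
        have haE : a ∈ E := by
          by_contra haE
          have hcd : a ∉ D := fun hD' => haE (Finset.mem_filter.mp hD').1
          rw [hsame a hcd] at hna
          have hint : ∃ k : ℤ, (k:ℝ) = f a := by
            by_contra h'
            exact haE (Finset.mem_filter.2 ⟨Finset.mem_univ a, h'⟩)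
          exact hna hint
        refine Finset.mem_erase.2 ⟨?_, haE⟩
        rintro rfl; exact hna hastarint
      have hcard' : (univ.filter (fun a => ¬ ∃ k : ℤ, (k:ℝ) = f' a)).card < n := by
        calc (univ.filter (fun a => ¬ ∃ k : ℤ, (k:ℝ) = f' a)).card
            ≤ (E.erase astar).card := Finset.card_le_card hsubset
          _ < E.card := Finset.card_erase_lt_of_mem (Finset.mem_filter.mp hastar).1
          _ = n := hn
      -- conservation for f'
      have hcons' : ∀ v : V, ∑ a ∈ univ.filter (fun a => h a = v), f' a
          = ∑ a ∈ univ.filter (fun a => t a = v), f' a := by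
        intro v
        simp only [hf', Finset.sum_add_distrib, ← Finset.mul_sum]
        rw [hcons v, hccons v]
      obtain ⟨g, hg1, hg2⟩ := IH _ hcard' f' rfl hcons'
      refine ⟨g, fun a => ?_, hg2⟩
      by_cases ha : a ∈ D
      · obtain ⟨h1, h2⟩ := hbounds a ha
        obtain ⟨h3, h4⟩ := hg1 a
        constructor
        · exact le_trans (Int.le_floor.2 (h1.trans (le_refl _))) h3
        · exact le_trans h4 (Int.ceil_le.2 h2)
      · have hga := hg1 a
        rw [hsame a ha] at hga
        exact hga
end Circ

section MainAux
open scoped Classical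
/-- Tail map of the auxiliary flow network. -/
def tlMap : (F × F) ⊕ (F × Fin 3) → Option (F × Fin 3) :=
  Sum.elim (fun p => some (p.2, 2))
    (fun q => if q.2 = 0 then some (q.1, 0) else if q.2 = 1 then none else some (q.1, 1))

/-- Head map of the auxiliary flow network. -/
def hdMap : (F × F) ⊕ (F × Fin 3) → Option (F × Fin 3) :=
  Sum.elim (fun p => some (p.1, 0))
    (fun q => if q.2 = 2 then some (q.1, 2) else some (q.1, 1))

lemma tl_ne_hd : ∀ a : (F × F) ⊕ (F × Fin 3), tlMap a ≠ hdMap a := by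
  rintro (⟨i, j⟩ | ⟨i, k⟩) heq
  · simp only [tlMap, hdMap, Sum.elim_inl, Option.some.injEq, Prod.mk.injEq] at heq
    exact absurd heq.2 (by decide)
  · fin_cases k <;> simp [tlMap, hdMap] at heq

variable {β : Type*} [AddCommMonoid β]

lemma sum_head_s (g : (F × F) ⊕ (F × Fin 3) → β) (i : F) :
    ∑ a ∈ univ.filter (fun a => hdMap a = some (i, (0 : Fin 3))), g a
      = ∑ j : F, g (Sum.inl (i, j)) := by
  rw [Finset.sum_filter, Fintype.sum_sum_type]
  simp only [hdMap, Sum.elim_inl, Sum.elim_inr, Fintype.sum_prod_type, Fin.sum_univ_three]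
  simp [Prod.ext_iff, eq_comm]

lemma sum_tail_s (g : (F × F) ⊕ (F × Fin 3) → β) (i : F) :
    ∑ a ∈ univ.filter (fun a => tlMap a = some (i, (0 : Fin 3))), g a
      = g (Sum.inr (i, 0)) := by
  rw [Finset.sum_filter, Fintype.sum_sum_type]
  simp only [tlMap, Sum.elim_inl, Sum.elim_inr, Fintype.sum_prod_type, Fin.sum_univ_three]
  simp [Prod.ext_iff, eq_comm]

lemma sum_head_m (g : (F × F) ⊕ (F × Fin 3) → β) (i : F) :
    ∑ a ∈ univ.filter (fun a => hdMap a = some (i, (1 : Fin 3))), g a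
      = g (Sum.inr (i, 0)) + g (Sum.inr (i, 1)) := by
  rw [Finset.sum_filter, Fintype.sum_sum_type]
  simp only [hdMap, Sum.elim_inl, Sum.elim_inr, Fintype.sum_prod_type, Fin.sum_univ_three]
  simp [Prod.ext_iff, eq_comm, Finset.sum_add_distrib]

lemma sum_tail_m (g : (F × F) ⊕ (F × Fin 3) → β) (i : F) :
    ∑ a ∈ univ.filter (fun a => tlMap a = some (i, (1 : Fin 3))), g a
      = g (Sum.inr (i, 2)) := by
  rw [Finset.sum_filter, Fintype.sum_sum_type]
  simp only [tlMap, Sum.elim_inl, Sum.elim_inr, Fintype.sum_prod_type, Fin.sum_univ_three]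
  simp [Prod.ext_iff, eq_comm]

lemma sum_head_u (g : (F × F) ⊕ (F × Fin 3) → β) (i : F) :
    ∑ a ∈ univ.filter (fun a => hdMap a = some (i, (2 : Fin 3))), g a
      = g (Sum.inr (i, 2)) := by
  rw [Finset.sum_filter, Fintype.sum_sum_type]
  simp only [hdMap, Sum.elim_inl, Sum.elim_inr, Fintype.sum_prod_type, Fin.sum_univ_three]
  simp [Prod.ext_iff, eq_comm]

lemma sum_tail_u (g : (F × F) ⊕ (F × Fin 3) → β) (i : F) :
    ∑ a ∈ univ.filter (fun a => tlMap a = some (i, (2 : Fin 3))), g a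
      = ∑ j : F, g (Sum.inl (j, i)) := by
  rw [Finset.sum_filter, Fintype.sum_sum_type]
  simp only [tlMap, Sum.elim_inl, Sum.elim_inr, Fintype.sum_prod_type, Fin.sum_univ_three]
  rw [Finset.sum_comm]
  simp [Prod.ext_iff, eq_comm]

lemma sum_head_r (g : (F × F) ⊕ (F × Fin 3) → β) :
    ∑ a ∈ univ.filter (fun a => hdMap a = (none : Option (F × Fin 3))), g a = 0 := by
  rw [Finset.sum_filter, Fintype.sum_sum_type]
  simp only [hdMap, Sum.elim_inl, Sum.elim_inr, Fintype.sum_prod_type, Fin.sum_univ_three]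
  simp

lemma sum_tail_r (g : (F × F) ⊕ (F × Fin 3) → β) :
    ∑ a ∈ univ.filter (fun a => tlMap a = (none : Option (F × Fin 3))), g a
      = ∑ i : F, g (Sum.inr (i, 1)) := by
  rw [Finset.sum_filter, Fintype.sum_sum_type]
  simp only [tlMap, Sum.elim_inl, Sum.elim_inr, Fintype.sum_prod_type, Fin.sum_univ_three]
  simp

end MainAux

section MainAux2
open scoped Classical
/-- Flow values on the auxiliary network. -/
def fMap (M : Finset (F × F)) (XRel : F → F → ℝ) : (F × F) ⊕ (F × Fin 3) → ℝ :=
  Sum.elim (fun p => if p ∈ M then XRel p.1 p.2 else 0)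
    (fun q => if q.2 = 0 then ZS M XRel q.1 else if q.2 = 1 then Bal M XRel q.1
      else ZR M XRel q.1)

lemma row_sum_eq (M : Finset (F × F)) (XRel : F → F → ℝ) (i : F) :
    ∑ j : F, (if (i, j) ∈ M then XRel i j else 0) = ZS M XRel i := by
  rw [ZS, Finset.sum_filter]

lemma col_sum_eq (M : Finset (F × F)) (XRel : F → F → ℝ) (i : F) :
    ∑ j : F, (if (j, i) ∈ M then XRel j i else 0) = ZR M XRel i := by
  rw [ZR, Finset.sum_filter]

lemma sum_bal_eq_zero (M : Finset (F × F)) (XRel : F → F → ℝ) :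
    ∑ i : F, Bal M XRel i = 0 := by
  simp only [Bal, Finset.sum_sub_distrib]
  rw [sub_eq_zero]
  have h1 : ∀ i : F, ZR M XRel i = ∑ j : F, (if (j, i) ∈ M then XRel j i else 0) :=
    fun i => (col_sum_eq M XRel i).symm
  have h2 : ∀ i : F, ZS M XRel i = ∑ j : F, (if (i, j) ∈ M then XRel i j else 0) :=
    fun i => (row_sum_eq M XRel i).symm
  simp only [h1, h2]
  rw [Finset.sum_comm]

lemma cons_fMap (M : Finset (F × F)) (XRel : F → F → ℝ) :
    ∀ v : Option (F × Fin 3),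
      ∑ a ∈ univ.filter (fun a => hdMap a = v), fMap M XRel a
        = ∑ a ∈ univ.filter (fun a => tlMap a = v), fMap M XRel a := by
  intro v
  rcases v with _ | ⟨i, k⟩
  · rw [sum_head_r, sum_tail_r]
    simp only [fMap, Sum.elim_inr]
    norm_num
    exact (sum_bal_eq_zero M XRel).symm
  · fin_cases k
    · show ∑ a ∈ univ.filter (fun a => hdMap a = some (i, (0 : Fin 3))), fMap M XRel a
          = ∑ a ∈ univ.filter (fun a => tlMap a = some (i, (0 : Fin 3))), fMap M XRel a
      rw [sum_head_s, sum_tail_s]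
      simp only [fMap, Sum.elim_inl, Sum.elim_inr]
      norm_num
      exact row_sum_eq M XRel i
    · show ∑ a ∈ univ.filter (fun a => hdMap a = some (i, (1 : Fin 3))), fMap M XRel a
          = ∑ a ∈ univ.filter (fun a => tlMap a = some (i, (1 : Fin 3))), fMap M XRel a
      rw [sum_head_m, sum_tail_m]
      simp only [fMap, Sum.elim_inr]
      norm_num [Bal]
      rw [if_neg (by decide), if_neg (by decide)]
    · show ∑ a ∈ univ.filter (fun a => hdMap a = some (i, (2 : Fin 3))), fMap M XRel a
          = ∑ a ∈ univ.filter (fun a => tlMap a = some (i, (2 : Fin 3))), fMap M XRel a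
      rw [sum_head_u, sum_tail_u]
      simp only [fMap, Sum.elim_inl, Sum.elim_inr]
      norm_num
      exact (col_sum_eq M XRel i).symm

end MainAux2

/-- Existence of a feasible rounding (extended matrix rounding with balance
constraints). -/
theorem exists_feasible_rounding
    (M : Finset (F × F)) (hloop : ∀ i : F, (i, i) ∉ M)
    (XRel : F → F → ℝ) (hXRel : ∀ m ∈ M, 0 ≤ XRel m.1 m.2) :
    ∃ X : F → F → ℤ, FeasibleRounding M XRel X := by
  classical
  obtain ⟨g, hg1, hg2⟩ := circulation_round_aux tlMap hdMap tl_ne_hd _ (fMap M XRel) rfl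
    (cons_fMap M XRel)
  set X : F → F → ℤ := fun i j => g (Sum.inl (i, j)) with hX
  -- values of fMap at the various arcs
  have hfS : ∀ i : F, fMap M XRel (Sum.inr (i, 0)) = ZS M XRel i := by
    intro i; simp [fMap]
  have hfB : ∀ i : F, fMap M XRel (Sum.inr (i, 1)) = Bal M XRel i := by
    intro i; simp [fMap]
  have hfR : ∀ i : F, fMap M XRel (Sum.inr (i, 2)) = ZR M XRel i := by
    intro i; simp [fMap]
  have hg0 : ∀ p : F × F, p ∉ M → g (Sum.inl p) = 0 := by
    intro p hp
    have h1 := hg1 (Sum.inl p)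
    have h2 : fMap M XRel (Sum.inl p) = 0 := by simp [fMap, hp]
    rw [h2] at h1
    simp at h1
    omega
  -- conservation identities for g
  have hrow : ∀ i : F, ∑ j ∈ univ.filter (fun j => (i, j) ∈ M), X i j
      = g (Sum.inr (i, 0)) := by
    intro i
    have h1 := hg2 (some (i, 0))
    rw [sum_head_s, sum_tail_s] at h1
    rw [← h1, Finset.sum_filter]
    refine Finset.sum_congr rfl fun j _ => ?_
    by_cases hj : (i, j) ∈ M
    · simp [hj, hX]
    · simp [hj, hX, hg0 (i, j) hj]
  have hcol : ∀ i : F, ∑ j ∈ univ.filter (fun j => (j, i) ∈ M), X j i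
      = g (Sum.inr (i, 2)) := by
    intro i
    have h1 := hg2 (some (i, 2))
    rw [sum_head_u, sum_tail_u] at h1
    rw [h1, Finset.sum_filter]
    refine Finset.sum_congr rfl fun j _ => ?_
    by_cases hj : (j, i) ∈ M
    · simp [hj, hX]
    · simp [hj, hX, hg0 (j, i) hj]
  have hbal : ∀ i : F, g (Sum.inr (i, 0)) + g (Sum.inr (i, 1)) = g (Sum.inr (i, 2)) := by
    intro i
    have h1 := hg2 (some (i, 1))
    rw [sum_head_m, sum_tail_m] at h1
    exact h1
  refine ⟨X, ?_, ?_, ?_, ?_⟩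
  · intro m hm
    have h1 := hg1 (Sum.inl m)
    have h2 : fMap M XRel (Sum.inl m) = XRel m.1 m.2 := by simp [fMap, hm]
    rw [h2] at h1
    exact h1
  · intro i
    rw [hrow i]
    have h1 := hg1 (Sum.inr (i, 0))
    rw [hfS i] at h1
    exact h1
  · intro i
    rw [hcol i]
    have h1 := hg1 (Sum.inr (i, 2))
    rw [hfR i] at h1
    exact h1
  · intro i
    rw [hcol i, hrow i]
    have h1 := hg1 (Sum.inr (i, 1))
    rw [hfB i] at h1
    have h2 := hbal i
    constructor
    · omega
    · omega


end
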